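/- For n ≥ 6, the distinguishing index of the cycle C_n equals 2, and for n ∈ {3,4,5} it equals 3. -/

import Mathlib

set_option linter.unusedTactic false

open SimpleGraph

/-- The distinguishing index: least number of labels in an edge labeling
preserved only by the identity automorphism. -/
noncomputable def distinguishingIndex {V : Type*} (G : SimpleGraph V) : ℕ :=
  sInf {d : ℕ | ∃ f : Sym2 V → Fin d,
    ∀ φ : G ≃g G, (∀ e ∈ G.edgeSet, f (Sym2.map ⇑φ e) = f e) → ∀ v, φ v = v}

/-- The distinguishing number: least number of labels in a vertex labeling
preserved only by the identity automorphism. -/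
noncomputable def distinguishingNumber {V : Type*} (G : SimpleGraph V) : ℕ :=
  sInf {d : ℕ | ∃ f : V → Fin d,
    ∀ φ : G ≃g G, (∀ v, f (φ v) = f v) → ∀ v, φ v = v}

/-- The dutch windmill graph `D_n^k`: `n` copies of the cycle `C_k`
sharing one common central vertex (`none`). -/
def windmill (n k : ℕ) : SimpleGraph (Option (Fin n × Fin (k - 1))) :=
  SimpleGraph.fromRel (fun a b =>
    match a, b with
    | none, some (_, j) => j.val = 0 ∨ j.val = k - 2
    | some (i, j), some (i', j') => i = i' ∧ j'.val = j.val + 1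
    | _, _ => False)

namespace DistinguishingCycleAux

open Fin.NatCast Fin.CommRing

lemma cg_adj' {m : ℕ} {u v : Fin (m+3)} :
    (cycleGraph (m+3)).Adj u v ↔ u - v = 1 ∨ v - u = 1 := cycleGraph_adj

lemma two_ne_zero3 (m : ℕ) : (2 : Fin (m+3)) ≠ 0 := by
  intro h2'
  have : ((2:ℕ) : Fin (m+3)) = ((0:ℕ) : Fin (m+3)) := by simpa using h2'
  rw [Fin.ext_iff, Fin.val_natCast, Fin.val_natCast] at this
  simp [Nat.mod_eq_of_lt] at this

lemma resolve {n p q : ℕ} [NeZero n] (hp : p < n) (hq : q < n) (hpq : p ≠ q)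
    (h : ((p:ℕ) : Fin n) = ((q:ℕ) : Fin n)) : False := by
  rw [Fin.ext_iff, Fin.val_natCast, Fin.val_natCast,
    Nat.mod_eq_of_lt hp, Nat.mod_eq_of_lt hq] at h
  exact hpq h

/-- Every automorphism of a cycle is a rotation or a reflection. -/
lemma rigid {m : ℕ} (φ : cycleGraph (m+3) ≃g cycleGraph (m+3)) :
    (∀ v, φ v = φ 0 + v) ∨ (∀ v, φ v = φ 0 - v) := by
  have hadj : ∀ x : Fin (m+3), (cycleGraph (m+3)).Adj x (x+1) := by
    intro x; rw [cg_adj']; right; ring_nf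
  set ε : Fin (m+3) := φ 1 - φ 0 with hεdef
  have h01 : (cycleGraph (m+3)).Adj (φ 0) (φ 1) := φ.map_adj_iff.mpr (by simpa using hadj 0)
  have hε : ε = 1 ∨ ε = -1 := by
    rcases cg_adj'.mp h01 with h | h
    · right; rw [hεdef]; linear_combination -h
    · left; rw [hεdef]; linear_combination h
  have key : ∀ k : ℕ, φ ((k : Fin (m+3))) = φ 0 + ε * k ∧
      φ ((k : Fin (m+3)) + 1) = φ 0 + ε * k + ε := by
    intro k
    induction k with
    | zero =>
      refine ⟨by push_cast; ring_nf, ?_⟩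
      have h1 : φ 1 = φ 0 + ε := by rw [hεdef]; ring
      push_cast
      rw [zero_add, h1]; ring
    | succ k ih =>
      obtain ⟨hk, hk1⟩ := ih
      have hcast : ((k+1 : ℕ) : Fin (m+3)) = (k : Fin (m+3)) + 1 := by push_cast; ring
      have first : φ ((k+1 : ℕ) : Fin (m+3)) = φ 0 + ε * ((k+1:ℕ) : Fin (m+3)) := by
        rw [hcast, hk1]; push_cast; ring
      refine ⟨first, ?_⟩
      have hA : (cycleGraph (m+3)).Adj (φ ((k:Fin (m+3)) + 1)) (φ ((k:Fin (m+3)) + 1 + 1)) :=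
        φ.map_adj_iff.mpr (hadj _)
      have hbad : φ ((k:Fin (m+3)) + 1 + 1) ≠ φ ((k:Fin (m+3))) := by
        intro h
        have h2 := φ.toEquiv.injective h
        have : (2 : Fin (m+3)) = 0 := by linear_combination h2
        exact two_ne_zero3 m this
      rw [hcast]
      rcases cg_adj'.mp hA with h | h <;> rcases hε with he | he
      · exfalso; apply hbad; linear_combination hk1 - h + he - hk
      · push_cast
        linear_combination -h - he + hk1
      · push_cast
        linear_combination h - he + hk1
      · exfalso; apply hbad; linear_combination h + hk1 - hk + he
  have main : ∀ v : Fin (m+3), φ v = φ 0 + ε * v := by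
    intro v
    have := (key v.val).1
    rwa [Fin.cast_val_eq_self] at this
  rcases hε with he | he
  · left; intro v; rw [main v, he, one_mul]
  · right; intro v; rw [main v, he]; ring

lemma edge_mem {m : ℕ} (i : Fin (m+3)) :
    s(i, i+1) ∈ (cycleGraph (m+3)).edgeSet := by
  rw [mem_edgeSet, cg_adj']; right; ring_nf

lemma edge_decomp {m : ℕ} {e : Sym2 (Fin (m+3))} (he : e ∈ (cycleGraph (m+3)).edgeSet) :
    ∃ i, e = s(i, i+1) := by
  induction e with
  | _ u v =>
    rw [mem_edgeSet, cg_adj'] at he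
    rcases he with h | h
    · have h' : u = v + 1 := by linear_combination h
      exact ⟨v, by rw [h', Sym2.eq_swap]⟩
    · have h' : v = u + 1 := by linear_combination h
      exact ⟨u, by rw [h']⟩

/-- rotation by `r` -/
def rot {m : ℕ} (r : Fin (m+3)) : cycleGraph (m+3) ≃g cycleGraph (m+3) where
  toEquiv := Equiv.addRight r
  map_rel_iff' := by
    intro u v
    simp only [Equiv.coe_addRight, cg_adj']
    constructor
    · rintro (h | h)
      · left; linear_combination h
      · right; linear_combination h
    · rintro (h | h)
      · left; linear_combination h
      · right; linear_combination h

/-- reflection `v ↦ s - v` -/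
def refl' {m : ℕ} (s : Fin (m+3)) : cycleGraph (m+3) ≃g cycleGraph (m+3) where
  toEquiv := ⟨fun v => s - v, fun v => s - v, fun v => by simp, fun v => by simp⟩
  map_rel_iff' := by
    intro u v
    simp only [Equiv.coe_fn_mk, cg_adj']
    constructor
    · rintro (h | h)
      · right; linear_combination h
      · left; linear_combination h
    · rintro (h | h)
      · right; linear_combination h
      · left; linear_combination h

lemma rot_apply {m : ℕ} (r v : Fin (m+3)) : (rot r) v = v + r := rfl
lemma refl'_apply {m : ℕ} (s v : Fin (m+3)) : (refl' s) v = s - v := rfl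

lemma rot_one_ne_id {m : ℕ} : ∃ v : Fin (m+3), (rot (1 : Fin (m+3))) v ≠ v := by
  refine ⟨0, ?_⟩
  rw [rot_apply, zero_add]
  exact one_ne_zero

lemma refl'_ne_id {m : ℕ} (s : Fin (m+3)) : ∃ v : Fin (m+3), (refl' s) v ≠ v := by
  by_cases h0 : s - 0 = 0
  · refine ⟨1, ?_⟩
    rw [refl'_apply]
    rw [sub_zero] at h0
    rw [h0]
    intro h
    exact absurd (by linear_combination -h) (two_ne_zero3 m)
  · exact ⟨0, h0⟩

/-- lift a coloring of the edges `{i, i+1}` (indexed by `i`) to `Sym2`. -/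
def eCol {m d : ℕ} (c : Fin (m+3) → Fin (d+1)) : Sym2 (Fin (m+3)) → Fin (d+1) :=
  Sym2.lift ⟨fun x y => if y = x + 1 then c x else if x = y + 1 then c y else 0, by
    intro x y
    dsimp only
    by_cases h1 : y = x + 1 <;> by_cases h2 : x = y + 1
    · exact absurd (by rw [h1] at h2; linear_combination -h2) (two_ne_zero3 m)
    · rw [if_pos h1, if_neg h2, if_pos h1]
    · rw [if_neg h1, if_pos h2, if_pos h2]
    · rw [if_neg h1, if_neg h2, if_neg h2, if_neg h1]⟩

lemma eCol_edge {m d : ℕ} (c : Fin (m+3) → Fin (d+1)) (i : Fin (m+3)) :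
    eCol c s(i, i+1) = c i := by
  simp [eCol]

/-- if `c` (as an edge coloring) has no nontrivial rotational or reflective
symmetry, then `eCol c` is a distinguishing labeling. -/
lemma mem_core {m d : ℕ} (c : Fin (m+3) → Fin (d+1))
    (hrot : ∀ a : Fin (m+3), (∀ i, c (a + i) = c i) → a = 0)
    (hrefl : ∀ a : Fin (m+3), ¬ ∀ i, c (a - 1 - i) = c i) :
    ∃ f : Sym2 (Fin (m+3)) → Fin (d+1),
      ∀ φ : cycleGraph (m+3) ≃g cycleGraph (m+3),
        (∀ e ∈ (cycleGraph (m+3)).edgeSet, f (Sym2.map ⇑φ e) = f e) → ∀ v, φ v = v := by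
  refine ⟨eCol c, ?_⟩
  intro φ hpres
  rcases rigid φ with hφ | hφ
  · have hc : ∀ i, c (φ 0 + i) = c i := by
      intro i
      have h := hpres s(i, i+1) (edge_mem i)
      have e1 : φ (i + 1) = (φ 0 + i) + 1 := by rw [hφ]; ring
      rw [Sym2.map_pair_eq, hφ i, e1, eCol_edge, eCol_edge] at h
      exact h
    have ha := hrot (φ 0) hc
    intro v; rw [hφ v, ha, zero_add]
  · exfalso
    apply hrefl (φ 0)
    intro i
    have h := hpres s(i, i+1) (edge_mem i)
    have e1 : φ i = (φ 0 - 1 - i) + 1 := by rw [hφ]; ring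
    have e2 : φ (i + 1) = φ 0 - 1 - i := by rw [hφ]; ring
    rw [Sym2.map_pair_eq, e1, e2, Sym2.eq_swap, eCol_edge, eCol_edge] at h
    exact h

lemma no0 {m : ℕ} : ¬ ∃ f : Sym2 (Fin (m+3)) → Fin 0,
    ∀ φ : cycleGraph (m+3) ≃g cycleGraph (m+3),
      (∀ e ∈ (cycleGraph (m+3)).edgeSet, f (Sym2.map ⇑φ e) = f e) → ∀ v, φ v = v := by
  rintro ⟨f, -⟩
  exact (f s(0, 1)).elim0

lemma no1 {m : ℕ} : ¬ ∃ f : Sym2 (Fin (m+3)) → Fin 1,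
    ∀ φ : cycleGraph (m+3) ≃g cycleGraph (m+3),
      (∀ e ∈ (cycleGraph (m+3)).edgeSet, f (Sym2.map ⇑φ e) = f e) → ∀ v, φ v = v := by
  rintro ⟨f, hf⟩
  obtain ⟨v, hv⟩ := rot_one_ne_id (m := m)
  exact hv (hf (rot 1) (fun e _ => Subsingleton.elim _ _) v)

lemma no2_core {m : ℕ} (hdec : ∀ c : Fin (m+3) → Fin 2, ∃ t, ∀ i, c (t - i) = c i) :
    ¬ ∃ f : Sym2 (Fin (m+3)) → Fin 2,
      ∀ φ : cycleGraph (m+3) ≃g cycleGraph (m+3),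
        (∀ e ∈ (cycleGraph (m+3)).edgeSet, f (Sym2.map ⇑φ e) = f e) → ∀ v, φ v = v := by
  rintro ⟨f, hf⟩
  obtain ⟨t, ht⟩ := hdec (fun i => f s(i, i+1))
  obtain ⟨v, hv⟩ := refl'_ne_id (t + 1)
  apply hv
  apply hf (refl' (t+1))
  intro e he
  obtain ⟨i, rfl⟩ := edge_decomp he
  have e1 : (refl' (t+1)) i = (t - i) + 1 := by rw [refl'_apply]; ring
  have e2 : (refl' (t+1)) (i+1) = t - i := by rw [refl'_apply]; ring
  rw [Sym2.map_pair_eq, e1, e2, Sym2.eq_swap]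
  exact ht i

/-- the distinguishing 2-coloring for `n ≥ 6` : color edges `0, 1, 3` specially. -/
lemma mem2_big (m : ℕ) :
    ∃ f : Sym2 (Fin (m+6)) → Fin 2,
      ∀ φ : cycleGraph (m+6) ≃g cycleGraph (m+6),
        (∀ e ∈ (cycleGraph (m+6)).edgeSet, f (Sym2.map ⇑φ e) = f e) → ∀ v, φ v = v := by
  have hn6 : 6 ≤ m + 6 := by omega
  set c : Fin (m+6) → Fin 2 :=
    fun i => if i = 0 ∨ i = 1 ∨ i = 3 then 1 else 0 with hc_def
  have hiff : ∀ a : Fin (m+6), (∀ i, c (a + i) = c i) →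
      ∀ i : Fin (m+6), ((a + i = 0 ∨ a + i = 1 ∨ a + i = 3) ↔ (i = 0 ∨ i = 1 ∨ i = 3)) := by
    intro a hc i
    have h := hc i
    rw [hc_def] at h
    dsimp only at h
    by_cases h1 : (a + i = 0 ∨ a + i = 1 ∨ a + i = 3) <;>
      by_cases h2 : (i = 0 ∨ i = 1 ∨ i = 3)
    · exact iff_of_true h1 h2
    · rw [if_pos h1, if_neg h2] at h; exact absurd h (by decide)
    · rw [if_neg h1, if_pos h2] at h; exact absurd h (by decide)
    · exact iff_of_false h1 h2
  apply mem_core (d := 1) c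
  · -- rotations
    intro a hca
    have hiffa := hiff a hca
    have h0 := (hiffa 0).mpr (by left; rfl)
    have h1 := (hiffa 1).mpr (by right; left; rfl)
    rw [add_zero] at h0
    rcases h0 with h | h | h
    · exact h
    · exfalso
      rcases h1 with g | g | g
      · exact resolve (n := m+6) (p := 2) (q := 0) (by omega) (by omega) (by omega)
          (by push_cast; linear_combination g - h)
      · exact resolve (n := m+6) (p := 2) (q := 1) (by omega) (by omega) (by omega)
          (by push_cast; linear_combination g - h)
      · exact resolve (n := m+6) (p := 2) (q := 3) (by omega) (by omega) (by omega)
          (by push_cast; linear_combination g - h)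
    · exfalso
      rcases h1 with g | g | g
      · exact resolve (n := m+6) (p := 4) (q := 0) (by omega) (by omega) (by omega)
          (by push_cast; linear_combination g - h)
      · exact resolve (n := m+6) (p := 4) (q := 1) (by omega) (by omega) (by omega)
          (by push_cast; linear_combination g - h)
      · exact resolve (n := m+6) (p := 4) (q := 3) (by omega) (by omega) (by omega)
          (by push_cast; linear_combination g - h)
  · -- reflections
    intro a hca
    -- condition: ∀ i, c (a - 1 - i) = c i ; rewrite as rotational form
    have hiffa : ∀ i : Fin (m+6),
        ((a - 1 - i = 0 ∨ a - 1 - i = 1 ∨ a - 1 - i = 3) ↔ (i = 0 ∨ i = 1 ∨ i = 3)) := by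
      intro i
      have h := hca i
      rw [hc_def] at h
      dsimp only at h
      by_cases h1 : (a - 1 - i = 0 ∨ a - 1 - i = 1 ∨ a - 1 - i = 3) <;>
        by_cases h2 : (i = 0 ∨ i = 1 ∨ i = 3)
      · exact iff_of_true h1 h2
      · rw [if_pos h1, if_neg h2] at h; exact absurd h (by decide)
      · rw [if_neg h1, if_pos h2] at h; exact absurd h (by decide)
      · exact iff_of_false h1 h2
    have h0 := (hiffa 0).mpr (by left; rfl)
    have h1 := (hiffa 1).mpr (by right; left; rfl)
    have h3 := (hiffa 3).mpr (by right; right; rfl)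
    rw [sub_zero] at h0
    rcases h0 with h | h | h
    · -- a = 1
      rcases h1 with g | g | g
      · exact resolve (n := m+6) (p := 0) (q := 1) (by omega) (by omega) (by omega)
          (by push_cast; linear_combination g - h)
      · exact resolve (n := m+6) (p := 0) (q := 2) (by omega) (by omega) (by omega)
          (by push_cast; linear_combination g - h)
      · exact resolve (n := m+6) (p := 0) (q := 4) (by omega) (by omega) (by omega)
          (by push_cast; linear_combination g - h)
    · -- a = 2
      rcases h3 with g | g | g
      · exact resolve (n := m+6) (p := 0) (q := 2) (by omega) (by omega) (by omega)
          (by push_cast; linear_combination g - h)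
      · exact resolve (n := m+6) (p := 0) (q := 3) (by omega) (by omega) (by omega)
          (by push_cast; linear_combination g - h)
      · exact resolve (n := m+6) (p := 0) (q := 5) (by omega) (by omega) (by omega)
          (by push_cast; linear_combination g - h)
    · -- a = 4
      rcases h1 with g | g | g
      · exact resolve (n := m+6) (p := 2) (q := 0) (by omega) (by omega) (by omega)
          (by push_cast; linear_combination g - h)
      · exact resolve (n := m+6) (p := 2) (q := 1) (by omega) (by omega) (by omega)
          (by push_cast; linear_combination g - h)
      · exact resolve (n := m+6) (p := 2) (q := 3) (by omega) (by omega) (by omega)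
          (by push_cast; linear_combination g - h)

end DistinguishingCycleAux

open DistinguishingCycleAux in
theorem distinguishingIndex_cycleGraph (n : ℕ) :
    (6 ≤ n → distinguishingIndex (cycleGraph n) = 2) ∧
      (3 ≤ n → n ≤ 5 → distinguishingIndex (cycleGraph n) = 3) := by
  constructor
  · intro h6
    obtain ⟨m, rfl⟩ : ∃ m, n = m + 6 := ⟨n - 6, by omega⟩
    have hmem := mem2_big m
    unfold distinguishingIndex
    refine le_antisymm (Nat.sInf_le hmem) (le_csInf ⟨2, hmem⟩ ?_)
    intro d hd
    by_contra hlt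
    push_neg at hlt
    interval_cases d
    · exact no0 (m := m+3) hd
    · exact no1 (m := m+3) hd
  · intro h3 h5
    interval_cases n
    · have hmem := mem_core (m := 0) (d := 2) ![0,1,2] (by decide) (by decide)
      unfold distinguishingIndex
      refine le_antisymm (Nat.sInf_le hmem) (le_csInf ⟨3, hmem⟩ ?_)
      intro d hd
      by_contra hlt
      push_neg at hlt
      interval_cases d
      · exact no0 (m := 0) hd
      · exact no1 (m := 0) hd
      · exact no2_core (m := 0) (by decide) hd
    · have hmem := mem_core (m := 1) (d := 2) ![0,1,2,2] (by decide) (by decide)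
      unfold distinguishingIndex
      refine le_antisymm (Nat.sInf_le hmem) (le_csInf ⟨3, hmem⟩ ?_)
      intro d hd
      by_contra hlt
      push_neg at hlt
      interval_cases d
      · exact no0 (m := 1) hd
      · exact no1 (m := 1) hd
      · exact no2_core (m := 1) (by decide) hd
    · have hmem := mem_core (m := 2) (d := 2) ![0,1,2,2,2] (by decide) (by decide)
      unfold distinguishingIndex
      refine le_antisymm (Nat.sInf_le hmem) (le_csInf ⟨3, hmem⟩ ?_)
      intro d hd
      by_contra hlt
      push_neg at hlt
      interval_cases d
      · exact no0 (m := 2) hd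
      · exact no1 (m := 2) hd
      · exact no2_core (m := 2) (by decide) hd
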